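/- arXiv:2311.11044 — 3 statements merged into one kernel-verified Lean document; each statement's English description precedes it below -/
import Mathlib

section
/- Define μ_r : ℝ≥0 for r ≥ 1 by μ_1 = σ²/2, μ_2 = 2 ∫_0^1 (μ_1^t)² dt where μ_1^t = σ²/2, and μ_r = ∑_{i=1}^{r−1} C(r,i) ∫_0^1 μ_i^t μ_{r−i}^t dt with μ_i^t = i!(σ²/2)^i (1−t)^{i−1}. Then μ_r = r! (σ²/2)^r, i.e. μ_r equals the r-th moment of an exponential random variable with mean σ²/2. -/
lemma int_pow_aux (n : ℕ) : ∫ t in (0:ℝ)..1, (1-t)^n = 1/((n:ℝ)+1) := by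
  have := intervalIntegral.integral_comp_sub_left (a:=(0:ℝ)) (b:=1) (fun u : ℝ => u^n) 1
  simp only [show (1:ℝ) - 1 = 0 from by ring, show (1:ℝ) - 0 = 1 from by ring] at this
  rw [show (fun t : ℝ => (1-t)^n) = (fun t => (fun u : ℝ => u^n) (1 - t)) from rfl]
  rw [this, integral_pow]
  simp

theorem stmt1 (σ2 : ℝ) (hσ : 0 < σ2) (μ : ℕ → ℝ)
    (h1 : μ 1 = σ2 / 2)
    (h2 : μ 2 = 2 * ∫ _t in (0:ℝ)..1, (σ2 / 2) ^ 2)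
    (hrec : ∀ r, 3 ≤ r → μ r = ∑ i ∈ Finset.Ico 1 r, (r.choose i : ℝ) *
      ∫ t in (0:ℝ)..1,
        ((Nat.factorial i : ℝ) * (σ2 / 2) ^ i * (1 - t) ^ (i - 1)) *
        ((Nat.factorial (r - i) : ℝ) * (σ2 / 2) ^ (r - i) * (1 - t) ^ (r - i - 1))) :
    ∀ r, 1 ≤ r → μ r = (Nat.factorial r : ℝ) * (σ2 / 2) ^ r := by
  intro r hr
  match r, hr with
  | 1, _ => simpa [Nat.factorial] using h1
  | 2, _ =>
    rw [h2, intervalIntegral.integral_const]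
    norm_num [Nat.factorial]
  | (n+3), _ =>
    set r := n + 3 with hrdef
    rw [hrec r (by omega)]
    have hterm : ∀ i ∈ Finset.Ico 1 r, (r.choose i : ℝ) *
        (∫ t in (0:ℝ)..1,
          ((Nat.factorial i : ℝ) * (σ2 / 2) ^ i * (1 - t) ^ (i - 1)) *
          ((Nat.factorial (r - i) : ℝ) * (σ2 / 2) ^ (r - i) * (1 - t) ^ (r - i - 1)))
        = (Nat.factorial r : ℝ) * (σ2 / 2) ^ r * (1/(((r-2:ℕ):ℝ)+1)) := by
      intro i hi
      rw [Finset.mem_Ico] at hi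
      have h1i : 1 ≤ i := hi.1
      have hir : i < r := hi.2
      have hintgd : ∀ t : ℝ,
          ((Nat.factorial i : ℝ) * (σ2 / 2) ^ i * (1 - t) ^ (i - 1)) *
          ((Nat.factorial (r - i) : ℝ) * (σ2 / 2) ^ (r - i) * (1 - t) ^ (r - i - 1))
          = ((Nat.factorial i : ℝ) * (σ2 / 2) ^ i * ((Nat.factorial (r - i) : ℝ) * (σ2 / 2) ^ (r - i))) * (1 - t) ^ (r - 2) := by
        intro t
        have h : (i-1)+(r-i-1) = r-2 := by omega
        rw [← h, pow_add]; ring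
      simp_rw [hintgd]
      rw [intervalIntegral.integral_const_mul, int_pow_aux]
      have hfac : (r.choose i : ℝ) * (Nat.factorial i : ℝ) * (Nat.factorial (r-i) : ℝ)
          = (Nat.factorial r : ℝ) := by
        exact_mod_cast congrArg (Nat.cast : ℕ → ℝ)
          (Nat.choose_mul_factorial_mul_factorial hir.le)
      have hp : (σ2/2)^i * (σ2/2)^(r-i) = (σ2/2)^r := by
        rw [← pow_add]; congr 1; omega
      rw [← hfac, ← hp]; ring
    rw [Finset.sum_congr rfl hterm, Finset.sum_const, Nat.card_Ico]
    have h1 : (r - 1 : ℕ) = n + 2 := by omega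
    have h2 : (r - 2 : ℕ) = n + 1 := by omega
    rw [h1, h2, nsmul_eq_mul]
    push_cast
    have : ((n:ℝ) + 1 + 1) ≠ 0 := by positivity
    field_simp
    ring
end

section
/- Define μ_r^t(x) recursively by μ_1^t(x) = (σ²/2)Φ_{1−t}(x), μ_2^t(x) = (σ⁴/2)∫_t^1 E[Φ_{1−s}(x − B_s)²] ds, and for i ≥ 3, μ_i^t(x) = ∑_{j=1}^{i−1} C(i,j) ∫_t^1 E[μ_j^s(x − B_s) μ_{i−j}^s(x − B_s)] ds. Then for all r ≥ 1, t ∈ [0,1], and x ∈ ℝ: 0 ≤ μ_r^t(x) ≤ r!(σ²/2)^r (1−t)^{r−1}, and x ↦ μ_r^t(x) is nondecreasing. -/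
open MeasureTheory ProbabilityTheory
open scoped NNReal

/-- Standard normal cumulative distribution function Φ. -/
noncomputable def Phi (x : ℝ) : ℝ := ((gaussianReal 0 1) (Set.Iic x)).toReal

lemma Phi_nonneg (x : ℝ) : 0 ≤ Phi x := ENNReal.toReal_nonneg

lemma Phi_le_one (x : ℝ) : Phi x ≤ 1 := by
  have h : (gaussianReal 0 1) (Set.Iic x) ≤ 1 := prob_le_one
  have := ENNReal.toReal_mono (by norm_num) h
  simpa [Phi] using this

lemma Phi_mono : Monotone Phi := fun a b hab =>
  ENNReal.toReal_mono (measure_ne_top _ _) (measure_mono (Set.Iic_subset_Iic.2 hab))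

lemma Phi_measurable : Measurable Phi := Phi_mono.measurable

noncomputable def clamp01 (t : ℝ) : ℝ := max 0 (min t 1)

lemma clamp01_nonneg (t : ℝ) : 0 ≤ clamp01 t := le_max_left _ _

lemma clamp01_le_one (t : ℝ) : clamp01 t ≤ 1 := max_le (by norm_num) (min_le_right _ _)

lemma clamp01_eq {t : ℝ} (h0 : 0 ≤ t) (h1 : t ≤ 1) : clamp01 t = t := by
  simp [clamp01, min_eq_left h1, max_eq_right h0]

lemma measurable_clamp01 : Measurable clamp01 :=
  measurable_const.max (measurable_id.min measurable_const)

lemma integral_gaussian_eq (v : ℝ≥0) (f : ℝ → ℝ)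
    (hf : AEStronglyMeasurable f (gaussianReal 0 v)) :
    ∫ y, f y ∂(gaussianReal 0 v)
      = ∫ y, f (Real.sqrt v * y) ∂(gaussianReal 0 1) := by
  have hmap : (gaussianReal 0 1).map (fun y => Real.sqrt v * y) = gaussianReal 0 v := by
    have h := gaussianReal_map_const_mul (μ := 0) (v := 1) (Real.sqrt v)
    rw [h, mul_zero]
    congr 1
    rw [mul_one]
    ext
    exact Real.sq_sqrt v.coe_nonneg
  rw [← hmap, integral_map (measurable_const_mul _).aemeasurable (hmap ▸ hf)]

lemma prob_integral_le_const {ν : Measure ℝ} [IsProbabilityMeasure ν] {f : ℝ → ℝ} {C : ℝ}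
    (h0 : ∀ y, 0 ≤ f y) (hC : ∀ y, f y ≤ C) : ∫ y, f y ∂ν ≤ C := by
  calc ∫ y, f y ∂ν ≤ ∫ _, C ∂ν :=
        integral_mono_of_nonneg (Filter.Eventually.of_forall h0) (integrable_const C)
          (Filter.Eventually.of_forall hC)
    _ = C := by simp

lemma prob_integral_mono {ν : Measure ℝ} [IsProbabilityMeasure ν] {f g : ℝ → ℝ} {C : ℝ}
    (h0 : ∀ y, 0 ≤ f y) (hfg : ∀ y, f y ≤ g y) (hgm : AEStronglyMeasurable g ν)
    (hg0 : ∀ y, 0 ≤ g y) (hgC : ∀ y, g y ≤ C) :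
    ∫ y, f y ∂ν ≤ ∫ y, g y ∂ν := by
  refine integral_mono_of_nonneg (Filter.Eventually.of_forall h0) ?_
    (Filter.Eventually.of_forall hfg)
  refine (integrable_const C).mono' hgm (Filter.Eventually.of_forall fun y => ?_)
  rw [Real.norm_eq_abs, abs_of_nonneg (hg0 y)]
  exact hgC y

lemma my_integrableOn_of_bound {s : Set ℝ} {f g : ℝ → ℝ}
    (hs : MeasurableSet s)
    (hm : AEStronglyMeasurable f (volume.restrict s)) (hg : IntegrableOn g s volume)
    (h : ∀ u ∈ s, 0 ≤ f u ∧ f u ≤ g u) : IntegrableOn f s volume := by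
  refine hg.mono' hm ?_
  filter_upwards [self_mem_ae_restrict hs] with u hu
  rw [Real.norm_eq_abs, abs_of_nonneg (h u hu).1]
  exact (h u hu).2

lemma my_setIntegral_mono {s : Set ℝ} (hs : MeasurableSet s) {f g : ℝ → ℝ}
    (h0 : ∀ u ∈ s, 0 ≤ f u) (hfg : ∀ u ∈ s, f u ≤ g u) (hg : IntegrableOn g s volume) :
    ∫ u in s, f u ≤ ∫ u in s, g u := by
  refine integral_mono_of_nonneg ?_ hg ?_
  · filter_upwards [self_mem_ae_restrict hs] with u hu using h0 u hu
  · filter_upwards [self_mem_ae_restrict hs] with u hu using hfg u hu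

-- key integral computation
lemma integral_one_sub_pow {t : ℝ} (ht : t ≤ 1) (n : ℕ) :
    ∫ s in Set.Ioc t 1, (1 - s) ^ n = (1 - t) ^ (n + 1) / (n + 1) := by
  rw [← intervalIntegral.integral_of_le ht]
  rw [intervalIntegral.integral_comp_sub_left (fun x => x ^ n) 1]
  simp [integral_pow]

theorem stmt11 (σ2 : ℝ) (hσ : 0 < σ2) (μ : ℕ → ℝ → ℝ → ℝ)
    (h1 : ∀ t x : ℝ, μ 1 t x = σ2 / 2 * Phi (x / Real.sqrt (1 - t)))
    (h2 : ∀ t x : ℝ, μ 2 t x = σ2 ^ 2 / 2 * ∫ s in t..(1:ℝ),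
      ∫ y, (Phi ((x - y) / Real.sqrt (1 - s))) ^ 2 ∂(gaussianReal 0 s.toNNReal))
    (hrec : ∀ i, 3 ≤ i → ∀ t x : ℝ, μ i t x = ∑ j ∈ Finset.Ico 1 i, (i.choose j : ℝ) *
      ∫ s in t..(1:ℝ), ∫ y, μ j s (x - y) * μ (i - j) s (x - y) ∂(gaussianReal 0 s.toNNReal)) :
    ∀ r, 1 ≤ r → ∀ t ∈ Set.Icc (0:ℝ) 1,
      (∀ x, 0 ≤ μ r t x ∧
        μ r t x ≤ (r.factorial : ℝ) * (σ2 / 2) ^ r * (1 - t) ^ (r - 1)) ∧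
      Monotone (μ r t) := by
  suffices H : ∀ r, 1 ≤ r →
      (∀ t ∈ Set.Icc (0:ℝ) 1,
        (∀ x, 0 ≤ μ r t x ∧
          μ r t x ≤ (r.factorial : ℝ) * (σ2 / 2) ^ r * (1 - t) ^ (r - 1)) ∧
        Monotone (μ r t)) ∧
      Measurable (fun p : ℝ × ℝ => μ r (clamp01 p.1) p.2) by
    exact fun r hr => (H r hr).1
  intro r
  induction r using Nat.strong_induction_on with
  | _ r IH =>
  intro hr
  have hcase : r = 1 ∨ r = 2 ∨ ∃ i, r = i + 3 := by
    rcases Nat.lt_or_ge r 3 with h | h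
    · interval_cases r <;> simp
    · exact Or.inr (Or.inr ⟨r - 3, by omega⟩)
  rcases hcase with rfl | rfl | ⟨i, rfl⟩
  · -- case r = 1
    constructor
    · intro t ht
      constructor
      · intro x
        rw [h1]
        constructor
        · exact mul_nonneg (by positivity) (Phi_nonneg _)
        · calc σ2 / 2 * Phi (x / Real.sqrt (1 - t)) ≤ σ2 / 2 * 1 :=
                mul_le_mul_of_nonneg_left (Phi_le_one _) (by positivity)
            _ = (Nat.factorial 1 : ℝ) * (σ2 / 2) ^ 1 * (1 - t) ^ (1 - 1) := by
                norm_num [Nat.factorial]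
      · intro a b hab
        rw [h1, h1]
        refine mul_le_mul_of_nonneg_left (Phi_mono ?_) (by positivity)
        rw [div_eq_mul_inv, div_eq_mul_inv]
        exact mul_le_mul_of_nonneg_right hab (inv_nonneg.2 (Real.sqrt_nonneg _))
    · have heq : (fun p : ℝ × ℝ => μ 1 (clamp01 p.1) p.2)
          = fun p => σ2 / 2 * Phi (p.2 / Real.sqrt (1 - clamp01 p.1)) :=
        funext fun p => h1 _ _
      rw [heq]
      exact measurable_const.mul (Phi_measurable.comp (measurable_snd.div
        ((measurable_const.sub (measurable_clamp01.comp measurable_fst)).sqrt)))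
  · -- case r = 2
    classical
    set G : ℝ × ℝ → ℝ := fun q =>
      ∫ y, (Phi ((q.2 - Real.sqrt (clamp01 q.1) * y) / Real.sqrt (1 - clamp01 q.1))) ^ 2
        ∂(gaussianReal 0 1) with hG
    have meas_inner : ∀ (s x : ℝ),
        Measurable fun y => (Phi ((x - y) / Real.sqrt (1 - s))) ^ 2 := fun s x =>
      (Phi_measurable.comp ((measurable_const.sub measurable_id).div_const _)).pow_const 2
    have G_meas : Measurable G := by
      have hSM : StronglyMeasurable fun q : (ℝ × ℝ) × ℝ =>
          (Phi ((q.1.2 - Real.sqrt (clamp01 q.1.1) * q.2) / Real.sqrt (1 - clamp01 q.1.1))) ^ 2 := by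
        have hc : Measurable fun q : (ℝ × ℝ) × ℝ => clamp01 q.1.1 :=
          measurable_clamp01.comp measurable_fst.fst
        exact ((Phi_measurable.comp (((measurable_fst.snd).sub (hc.sqrt.mul measurable_snd)).div
          ((measurable_const.sub hc).sqrt))).pow_const 2).stronglyMeasurable
      exact hSM.integral_prod_right'.measurable
    have g_nonneg : ∀ s x : ℝ, 0 ≤ ∫ y, (Phi ((x - y) / Real.sqrt (1 - s))) ^ 2
        ∂(gaussianReal 0 s.toNNReal) := fun s x => integral_nonneg fun y => sq_nonneg _
    have g_le_one : ∀ s x : ℝ, (∫ y, (Phi ((x - y) / Real.sqrt (1 - s))) ^ 2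
        ∂(gaussianReal 0 s.toNNReal)) ≤ 1 := fun s x =>
      prob_integral_le_const (fun y => sq_nonneg _)
        (fun y => pow_le_one₀ (Phi_nonneg _) (Phi_le_one _))
    have gG : ∀ s ∈ Set.Icc (0:ℝ) 1, ∀ x : ℝ,
        (∫ y, (Phi ((x - y) / Real.sqrt (1 - s))) ^ 2 ∂(gaussianReal 0 s.toNNReal)) = G (s, x) := by
      intro s hs x
      rw [integral_gaussian_eq s.toNNReal _ (meas_inner s x).aestronglyMeasurable, hG]
      simp only
      rw [clamp01_eq hs.1 hs.2, Real.coe_toNNReal s hs.1]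
    have g_mono : ∀ s : ℝ, ∀ a b : ℝ, a ≤ b →
        (∫ y, (Phi ((a - y) / Real.sqrt (1 - s))) ^ 2 ∂(gaussianReal 0 s.toNNReal)) ≤
        ∫ y, (Phi ((b - y) / Real.sqrt (1 - s))) ^ 2 ∂(gaussianReal 0 s.toNNReal) := by
      intro s a b hab
      refine prob_integral_mono (C := 1) (fun y => sq_nonneg _) ?_
        (meas_inner s b).aestronglyMeasurable (fun y => sq_nonneg _)
        (fun y => pow_le_one₀ (Phi_nonneg _) (Phi_le_one _))
      intro y
      refine pow_le_pow_left₀ (Phi_nonneg _) (Phi_mono ?_) 2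
      rw [div_eq_mul_inv, div_eq_mul_inv]
      exact mul_le_mul_of_nonneg_right (sub_le_sub_right hab y)
        (inv_nonneg.2 (Real.sqrt_nonneg _))
    constructor
    · intro t ht
      constructor
      · intro x
        rw [h2, intervalIntegral.integral_of_le ht.2]
        have hone : ∫ s in Set.Ioc t 1, (1:ℝ) = 1 - t := by
          simp [Real.volume_Ioc, ENNReal.toReal_ofReal (sub_nonneg.2 ht.2)]
          exact ht.2
        constructor
        · exact mul_nonneg (by positivity)
            (setIntegral_nonneg measurableSet_Ioc fun s _ => g_nonneg s x)
        · have hIle : (∫ s in Set.Ioc t 1,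
              ∫ y, (Phi ((x - y) / Real.sqrt (1 - s))) ^ 2 ∂(gaussianReal 0 s.toNNReal)) ≤ 1 - t := by
            rw [← hone]
            refine my_setIntegral_mono measurableSet_Ioc (fun s _ => g_nonneg s x)
              (fun s _ => g_le_one s x) ?_
            exact integrableOn_const (by rw [Real.volume_Ioc]; exact ENNReal.ofReal_ne_top)
          calc σ2 ^ 2 / 2 * ∫ s in Set.Ioc t 1,
                ∫ y, (Phi ((x - y) / Real.sqrt (1 - s))) ^ 2 ∂(gaussianReal 0 s.toNNReal)
              ≤ σ2 ^ 2 / 2 * (1 - t) := mul_le_mul_of_nonneg_left hIle (by positivity)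
            _ = (Nat.factorial 2 : ℝ) * (σ2 / 2) ^ 2 * (1 - t) ^ (2 - 1) := by
                rw [show (Nat.factorial 2 : ℝ) = 2 by norm_num [Nat.factorial]]; ring
      · intro a b hab
        rw [h2, h2, intervalIntegral.integral_of_le ht.2, intervalIntegral.integral_of_le ht.2]
        refine mul_le_mul_of_nonneg_left ?_ (by positivity)
        refine my_setIntegral_mono measurableSet_Ioc (fun s _ => g_nonneg s a)
          (fun s _ => g_mono s a b hab) ?_
        refine my_integrableOn_of_bound (g := fun _ => (1:ℝ)) measurableSet_Ioc ?_
          (integrableOn_const (by rw [Real.volume_Ioc]; exact ENNReal.ofReal_ne_top))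
          (fun s hs => ⟨g_nonneg s b, g_le_one s b⟩)
        have hG2 : Measurable fun s : ℝ => G (s, b) :=
          G_meas.comp (measurable_id.prodMk measurable_const)
        refine hG2.aestronglyMeasurable.congr ?_
        filter_upwards [self_mem_ae_restrict measurableSet_Ioc] with s hs
        exact (gG s ⟨le_trans ht.1 (le_of_lt hs.1), hs.2⟩ b).symm
    · have heq : (fun p : ℝ × ℝ => μ 2 (clamp01 p.1) p.2) = fun p =>
          σ2 ^ 2 / 2 * ∫ s, Set.indicator (Set.Ioc (clamp01 p.1) 1) (fun s' => G (s', p.2)) s := by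
        funext p
        rw [h2, intervalIntegral.integral_of_le (clamp01_le_one _)]
        rw [← integral_indicator measurableSet_Ioc]
        refine congrArg _ (integral_congr_ae (Filter.Eventually.of_forall fun s => ?_))
        by_cases hs : s ∈ Set.Ioc (clamp01 p.1) 1
        · rw [Set.indicator_of_mem hs, Set.indicator_of_mem hs]
          exact gG s ⟨le_trans (clamp01_nonneg _) (le_of_lt hs.1), hs.2⟩ p.2
        · rw [Set.indicator_of_notMem hs, Set.indicator_of_notMem hs]
      rw [heq]
      refine measurable_const.mul ?_
      have hSM : StronglyMeasurable fun q : (ℝ × ℝ) × ℝ =>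
          Set.indicator (Set.Ioc (clamp01 q.1.1) 1) (fun s' => G (s', q.1.2)) q.2 := by
        have hite : (fun q : (ℝ × ℝ) × ℝ =>
            Set.indicator (Set.Ioc (clamp01 q.1.1) 1) (fun s' => G (s', q.1.2)) q.2)
            = fun q => if clamp01 q.1.1 < q.2 ∧ q.2 ≤ 1 then G (q.2, q.1.2) else 0 :=
          funext fun q => by simp [Set.indicator_apply, Set.mem_Ioc]
        rw [hite]
        refine (Measurable.ite ?_ (G_meas.comp (measurable_snd.prodMk measurable_fst.snd))
          measurable_const).stronglyMeasurable
        exact ((measurableSet_lt (measurable_clamp01.comp measurable_fst.fst) measurable_snd).inter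
          (measurableSet_le measurable_snd measurable_const))
      exact hSM.integral_prod_right'.measurable
  · -- case r = i + 3
    classical
    have h3 : 3 ≤ i + 3 := by omega
    have IHb : ∀ m, 1 ≤ m → m < i + 3 → ∀ s ∈ Set.Icc (0:ℝ) 1, ∀ x : ℝ,
        0 ≤ μ m s x ∧ μ m s x ≤ (m.factorial : ℝ) * (σ2 / 2) ^ m * (1 - s) ^ (m - 1) :=
      fun m h1m h2m s hs => ((IH m h2m h1m).1 s hs).1
    have IHmono : ∀ m, 1 ≤ m → m < i + 3 → ∀ s ∈ Set.Icc (0:ℝ) 1, Monotone (μ m s) :=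
      fun m h1m h2m s hs => ((IH m h2m h1m).1 s hs).2
    have IHmeas : ∀ m, 1 ≤ m → m < i + 3 →
        Measurable (fun p : ℝ × ℝ => μ m (clamp01 p.1) p.2) :=
      fun m h1m h2m => (IH m h2m h1m).2
    set K : ℕ → ℝ := fun j => ((j.factorial : ℝ) * ((i + 3 - j).factorial : ℝ)) *
      (σ2 / 2) ^ (i + 3) with hK
    set HH : ℕ → ℝ × ℝ → ℝ := fun j q =>
      ∫ y, μ j (clamp01 q.1) (q.2 - Real.sqrt (clamp01 q.1) * y) *
        μ (i + 3 - j) (clamp01 q.1) (q.2 - Real.sqrt (clamp01 q.1) * y)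
        ∂(gaussianReal 0 1) with hHH
    -- inner integrand measurability
    have K1 : ∀ m, 1 ≤ m → m < i + 3 → ∀ s ∈ Set.Icc (0:ℝ) 1, ∀ x : ℝ,
        Measurable fun y : ℝ => μ m s (x - y) := fun m h1m h2m s hs x =>
      (IHmono m h1m h2m s hs).measurable.comp (measurable_const.sub measurable_id)
    have hjk : ∀ j, 1 ≤ j → j < i + 3 → (1 ≤ i + 3 - j ∧ i + 3 - j < i + 3) := by omega
    -- nonneg of inner integral
    have K2 : ∀ j, 1 ≤ j → j < i + 3 → ∀ s ∈ Set.Icc (0:ℝ) 1, ∀ x : ℝ,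
        0 ≤ ∫ y, μ j s (x - y) * μ (i + 3 - j) s (x - y) ∂(gaussianReal 0 s.toNNReal) := by
      intro j hj1 hj2 s hs x
      exact integral_nonneg fun y => mul_nonneg
        (IHb j hj1 hj2 s hs _).1 (IHb _ (hjk j hj1 hj2).1 (hjk j hj1 hj2).2 s hs _).1
    -- pointwise product bound
    have Kprod : ∀ j, 1 ≤ j → j < i + 3 → ∀ s ∈ Set.Icc (0:ℝ) 1,
        ((j.factorial : ℝ) * (σ2 / 2) ^ j * (1 - s) ^ (j - 1)) *
          (((i + 3 - j).factorial : ℝ) * (σ2 / 2) ^ (i + 3 - j) * (1 - s) ^ (i + 3 - j - 1))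
          = K j * (1 - s) ^ (i + 1) := by
      intro j hj1 hj2 s _
      obtain ⟨a, rfl⟩ : ∃ a, j = a + 1 := ⟨j - 1, by omega⟩
      simp only [hK]
      rw [show i + 3 - (a + 1) = i + 2 - a from by omega,
        show a + 1 - 1 = a from by omega, show i + 2 - a - 1 = i + 1 - a from by omega]
      have e1 : (σ2 / 2) ^ (a + 1) * (σ2 / 2) ^ (i + 2 - a) = (σ2 / 2) ^ (i + 3) := by
        rw [← pow_add]; congr 1; omega
      have e2 : (1 - s) ^ a * (1 - s) ^ (i + 1 - a) = (1 - s) ^ (i + 1) := by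
        rw [← pow_add]; congr 1; omega
      calc ((a + 1).factorial : ℝ) * (σ2 / 2) ^ (a + 1) * (1 - s) ^ a *
            (((i + 2 - a).factorial : ℝ) * (σ2 / 2) ^ (i + 2 - a) * (1 - s) ^ (i + 1 - a))
          = ((a + 1).factorial : ℝ) * ((i + 2 - a).factorial : ℝ) *
            ((σ2 / 2) ^ (a + 1) * (σ2 / 2) ^ (i + 2 - a)) *
            ((1 - s) ^ a * (1 - s) ^ (i + 1 - a)) := by ring
        _ = ((a + 1).factorial : ℝ) * ((i + 2 - a).factorial : ℝ) * (σ2 / 2) ^ (i + 3) *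
            (1 - s) ^ (i + 1) := by rw [e1, e2]
    -- upper bound for inner integral
    have K3 : ∀ j, 1 ≤ j → j < i + 3 → ∀ s ∈ Set.Icc (0:ℝ) 1, ∀ x : ℝ,
        (∫ y, μ j s (x - y) * μ (i + 3 - j) s (x - y) ∂(gaussianReal 0 s.toNNReal))
          ≤ K j * (1 - s) ^ (i + 1) := by
      intro j hj1 hj2 s hs x
      rw [← Kprod j hj1 hj2 s hs]
      refine prob_integral_le_const
        (fun y => mul_nonneg (IHb j hj1 hj2 s hs _).1
          (IHb _ (hjk j hj1 hj2).1 (hjk j hj1 hj2).2 s hs _).1) (fun y => ?_)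
      exact mul_le_mul (IHb j hj1 hj2 s hs _).2 (IHb _ (hjk j hj1 hj2).1 (hjk j hj1 hj2).2 s hs _).2
        (IHb _ (hjk j hj1 hj2).1 (hjk j hj1 hj2).2 s hs _).1
        (mul_nonneg (mul_nonneg (Nat.cast_nonneg _) (by positivity))
          (pow_nonneg (sub_nonneg.2 hs.2) _))
    -- monotonicity in x of inner integral
    have K4 : ∀ j, 1 ≤ j → j < i + 3 → ∀ s ∈ Set.Icc (0:ℝ) 1, ∀ a b : ℝ, a ≤ b →
        (∫ y, μ j s (a - y) * μ (i + 3 - j) s (a - y) ∂(gaussianReal 0 s.toNNReal))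
          ≤ ∫ y, μ j s (b - y) * μ (i + 3 - j) s (b - y) ∂(gaussianReal 0 s.toNNReal) := by
      intro j hj1 hj2 s hs a b hab
      refine prob_integral_mono (C := K j * (1 - s) ^ (i + 1))
        (fun y => mul_nonneg (IHb j hj1 hj2 s hs _).1
          (IHb _ (hjk j hj1 hj2).1 (hjk j hj1 hj2).2 s hs _).1)
        (fun y => ?_)
        (((K1 j hj1 hj2 s hs b).mul (K1 _ (hjk j hj1 hj2).1 (hjk j hj1 hj2).2 s hs b)).aestronglyMeasurable)
        (fun y => mul_nonneg (IHb j hj1 hj2 s hs _).1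
          (IHb _ (hjk j hj1 hj2).1 (hjk j hj1 hj2).2 s hs _).1)
        (fun y => ?_)
      · exact mul_le_mul (IHmono j hj1 hj2 s hs (by linarith : a - y ≤ b - y))
          (IHmono _ (hjk j hj1 hj2).1 (hjk j hj1 hj2).2 s hs (by linarith : a - y ≤ b - y))
          (IHb _ (hjk j hj1 hj2).1 (hjk j hj1 hj2).2 s hs _).1
          (IHb j hj1 hj2 s hs _).1
      · rw [← Kprod j hj1 hj2 s hs]
        exact mul_le_mul (IHb j hj1 hj2 s hs _).2
          (IHb _ (hjk j hj1 hj2).1 (hjk j hj1 hj2).2 s hs _).2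
          (IHb _ (hjk j hj1 hj2).1 (hjk j hj1 hj2).2 s hs _).1
          (mul_nonneg (mul_nonneg (Nat.cast_nonneg _) (by positivity))
            (pow_nonneg (sub_nonneg.2 hs.2) _))
    -- equality with the clamped version
    have K5 : ∀ j, 1 ≤ j → j < i + 3 → ∀ s ∈ Set.Icc (0:ℝ) 1, ∀ x : ℝ,
        (∫ y, μ j s (x - y) * μ (i + 3 - j) s (x - y) ∂(gaussianReal 0 s.toNNReal))
          = HH j (s, x) := by
      intro j hj1 hj2 s hs x
      rw [integral_gaussian_eq s.toNNReal (fun y => μ j s (x - y) * μ (i + 3 - j) s (x - y))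
        (((K1 j hj1 hj2 s hs x).mul (K1 _ (hjk j hj1 hj2).1 (hjk j hj1 hj2).2 s hs x)).aestronglyMeasurable),
        hHH]
      simp only
      rw [clamp01_eq hs.1 hs.2, Real.coe_toNNReal s hs.1]
    -- measurability of HH j
    have K6 : ∀ j, 1 ≤ j → j < i + 3 → Measurable (HH j) := by
      intro j hj1 hj2
      have hmap : Measurable fun q : (ℝ × ℝ) × ℝ =>
          (q.1.1, q.1.2 - Real.sqrt (clamp01 q.1.1) * q.2) :=
        (measurable_fst.fst).prodMk ((measurable_fst.snd).sub
          (((measurable_clamp01.comp measurable_fst.fst).sqrt).mul measurable_snd))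
      have hSM : StronglyMeasurable fun q : (ℝ × ℝ) × ℝ =>
          μ j (clamp01 q.1.1) (q.1.2 - Real.sqrt (clamp01 q.1.1) * q.2) *
          μ (i + 3 - j) (clamp01 q.1.1) (q.1.2 - Real.sqrt (clamp01 q.1.1) * q.2) :=
        (((IHmeas j hj1 hj2).comp hmap).mul
          ((IHmeas _ (hjk j hj1 hj2).1 (hjk j hj1 hj2).2).comp hmap)).stronglyMeasurable
      exact hSM.integral_prod_right'.measurable
    -- integrability of the bound
    have Kint : ∀ t : ℝ, t ≤ 1 → ∀ j, IntegrableOn (fun s => K j * (1 - s) ^ (i + 1))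
        (Set.Ioc t 1) volume := by
      intro t ht2 j
      have hcont : Continuous fun s : ℝ => K j * (1 - s) ^ (i + 1) :=
        continuous_const.mul ((continuous_const.sub continuous_id).pow _)
      exact (intervalIntegrable_iff_integrableOn_Ioc_of_le ht2).mp (hcont.intervalIntegrable _ _)
    -- integrability of inner integral in s
    have K7 : ∀ t ∈ Set.Icc (0:ℝ) 1, ∀ j, 1 ≤ j → j < i + 3 → ∀ x : ℝ,
        IntegrableOn (fun s => ∫ y, μ j s (x - y) * μ (i + 3 - j) s (x - y)
          ∂(gaussianReal 0 s.toNNReal)) (Set.Ioc t 1) volume := by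
      intro t ht j hj1 hj2 x
      refine my_integrableOn_of_bound measurableSet_Ioc ?_ (Kint t ht.2 j) (fun s hs =>
        ⟨K2 j hj1 hj2 s ⟨le_trans ht.1 hs.1.le, hs.2⟩ x,
         K3 j hj1 hj2 s ⟨le_trans ht.1 hs.1.le, hs.2⟩ x⟩)
      have hmeas : Measurable fun s : ℝ => HH j (s, x) :=
        (K6 j hj1 hj2).comp (measurable_id.prodMk measurable_const)
      refine hmeas.aestronglyMeasurable.congr ?_
      filter_upwards [self_mem_ae_restrict measurableSet_Ioc] with s hs
      exact (K5 j hj1 hj2 s ⟨le_trans ht.1 hs.1.le, hs.2⟩ x).symm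
    -- value of the bound integral
    have K8 : ∀ t ∈ Set.Icc (0:ℝ) 1, ∀ j,
        (∫ s in Set.Ioc t 1, K j * (1 - s) ^ (i + 1))
          = K j * ((1 - t) ^ (i + 2) / (i + 2)) := by
      intro t ht j
      rw [integral_const_mul, integral_one_sub_pow ht.2 (i + 1)]
      congr 1
      push_cast
      ring_nf
    -- rewrite of the recursion with set integrals
    have hsum : ∀ t ∈ Set.Icc (0:ℝ) 1, ∀ x : ℝ, μ (i + 3) t x
        = ∑ j ∈ Finset.Ico 1 (i + 3), ((i + 3).choose j : ℝ) *
          ∫ s in Set.Ioc t 1, ∫ y, μ j s (x - y) * μ (i + 3 - j) s (x - y)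
            ∂(gaussianReal 0 s.toNNReal) := by
      intro t ht x
      rw [hrec (i + 3) h3 t x]
      exact Finset.sum_congr rfl fun j _ => by
        rw [intervalIntegral.integral_of_le ht.2]
    constructor
    · intro t ht
      constructor
      · intro x
        rw [hsum t ht x]
        constructor
        · refine Finset.sum_nonneg fun j hj => ?_
          rw [Finset.mem_Ico] at hj
          exact mul_nonneg (Nat.cast_nonneg _) (setIntegral_nonneg measurableSet_Ioc
            fun s hs => K2 j hj.1 hj.2 s ⟨le_trans ht.1 hs.1.le, hs.2⟩ x)
        · have hterm : ∀ j ∈ Finset.Ico 1 (i + 3), ((i + 3).choose j : ℝ) *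
              (∫ s in Set.Ioc t 1, ∫ y, μ j s (x - y) * μ (i + 3 - j) s (x - y)
                ∂(gaussianReal 0 s.toNNReal))
              ≤ ((i + 3).factorial : ℝ) * (σ2 / 2) ^ (i + 3) * ((1 - t) ^ (i + 2) / (i + 2)) := by
            intro j hj
            rw [Finset.mem_Ico] at hj
            have hle : (∫ s in Set.Ioc t 1, ∫ y, μ j s (x - y) * μ (i + 3 - j) s (x - y)
                ∂(gaussianReal 0 s.toNNReal)) ≤ K j * ((1 - t) ^ (i + 2) / (i + 2)) := by
              rw [← K8 t ht j]
              exact my_setIntegral_mono measurableSet_Ioc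
                (fun s hs => K2 j hj.1 hj.2 s ⟨le_trans ht.1 hs.1.le, hs.2⟩ x)
                (fun s hs => K3 j hj.1 hj.2 s ⟨le_trans ht.1 hs.1.le, hs.2⟩ x)
                (Kint t ht.2 j)
            calc ((i + 3).choose j : ℝ) *
                (∫ s in Set.Ioc t 1, ∫ y, μ j s (x - y) * μ (i + 3 - j) s (x - y)
                  ∂(gaussianReal 0 s.toNNReal))
                ≤ ((i + 3).choose j : ℝ) * (K j * ((1 - t) ^ (i + 2) / (i + 2))) :=
                  mul_le_mul_of_nonneg_left hle (Nat.cast_nonneg _)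
              _ = ((i + 3).factorial : ℝ) * (σ2 / 2) ^ (i + 3) * ((1 - t) ^ (i + 2) / (i + 2)) := by
                  simp only [hK]
                  have hcf : ((i + 3).choose j : ℝ) * ((j.factorial : ℝ) *
                      ((i + 3 - j).factorial : ℝ)) = ((i + 3).factorial : ℝ) := by
                    rw [← Nat.choose_mul_factorial_mul_factorial (le_of_lt hj.2)]
                    push_cast
                    ring
                  calc ((i + 3).choose j : ℝ) * ((((j.factorial : ℝ) * ((i + 3 - j).factorial : ℝ)) *
                        (σ2 / 2) ^ (i + 3)) * ((1 - t) ^ (i + 2) / (i + 2)))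
                      = (((i + 3).choose j : ℝ) * ((j.factorial : ℝ) * ((i + 3 - j).factorial : ℝ))) *
                        (σ2 / 2) ^ (i + 3) * ((1 - t) ^ (i + 2) / (i + 2)) := by ring
                    _ = ((i + 3).factorial : ℝ) * (σ2 / 2) ^ (i + 3) *
                        ((1 - t) ^ (i + 2) / (i + 2)) := by rw [hcf]
          calc (∑ j ∈ Finset.Ico 1 (i + 3), ((i + 3).choose j : ℝ) *
                ∫ s in Set.Ioc t 1, ∫ y, μ j s (x - y) * μ (i + 3 - j) s (x - y)
                  ∂(gaussianReal 0 s.toNNReal))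
              ≤ ∑ j ∈ Finset.Ico 1 (i + 3), ((i + 3).factorial : ℝ) * (σ2 / 2) ^ (i + 3) *
                ((1 - t) ^ (i + 2) / (i + 2)) := Finset.sum_le_sum hterm
            _ = ((i + 3).factorial : ℝ) * (σ2 / 2) ^ (i + 3) * (1 - t) ^ (i + 3 - 1) := by
                rw [Finset.sum_const, Nat.card_Ico, nsmul_eq_mul]
                rw [show i + 3 - 1 = i + 2 from by omega]
                push_cast
                have hne : (i : ℝ) + 2 ≠ 0 := by positivity
                field_simp
      · intro a b hab
        rw [hsum t ht a, hsum t ht b]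
        refine Finset.sum_le_sum fun j hj => ?_
        rw [Finset.mem_Ico] at hj
        refine mul_le_mul_of_nonneg_left ?_ (Nat.cast_nonneg _)
        exact my_setIntegral_mono measurableSet_Ioc
          (fun s hs => K2 j hj.1 hj.2 s ⟨le_trans ht.1 hs.1.le, hs.2⟩ a)
          (fun s hs => K4 j hj.1 hj.2 s ⟨le_trans ht.1 hs.1.le, hs.2⟩ a b hab)
          (K7 t ht j hj.1 hj.2 b)
    · have heq : (fun p : ℝ × ℝ => μ (i + 3) (clamp01 p.1) p.2) = fun p =>
          ∑ j ∈ Finset.Ico 1 (i + 3), ((i + 3).choose j : ℝ) *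
            ∫ s, Set.indicator (Set.Ioc (clamp01 p.1) 1) (fun s' => HH j (s', p.2)) s := by
        funext p
        rw [hrec (i + 3) h3 (clamp01 p.1) p.2]
        refine Finset.sum_congr rfl fun j hj => ?_
        rw [Finset.mem_Ico] at hj
        congr 1
        rw [intervalIntegral.integral_of_le (clamp01_le_one _),
          ← integral_indicator measurableSet_Ioc]
        refine integral_congr_ae (Filter.Eventually.of_forall fun s => ?_)
        by_cases hs : s ∈ Set.Ioc (clamp01 p.1) 1
        · rw [Set.indicator_of_mem hs, Set.indicator_of_mem hs]
          exact K5 j hj.1 hj.2 s ⟨le_trans (clamp01_nonneg _) hs.1.le, hs.2⟩ p.2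
        · rw [Set.indicator_of_notMem hs, Set.indicator_of_notMem hs]
      rw [heq]
      refine Finset.measurable_sum _ fun j hj => ?_
      rw [Finset.mem_Ico] at hj
      refine measurable_const.mul ?_
      have hSM : StronglyMeasurable fun q : (ℝ × ℝ) × ℝ =>
          Set.indicator (Set.Ioc (clamp01 q.1.1) 1) (fun s' => HH j (s', q.1.2)) q.2 := by
        have hite : (fun q : (ℝ × ℝ) × ℝ =>
            Set.indicator (Set.Ioc (clamp01 q.1.1) 1) (fun s' => HH j (s', q.1.2)) q.2)
            = fun q => if clamp01 q.1.1 < q.2 ∧ q.2 ≤ 1 then HH j (q.2, q.1.2) else 0 :=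
          funext fun q => by simp [Set.indicator_apply, Set.mem_Ioc]
        rw [hite]
        refine (Measurable.ite ?_ ((K6 j hj.1 hj.2).comp
          (measurable_snd.prodMk measurable_fst.snd)) measurable_const).stronglyMeasurable
        exact ((measurableSet_lt (measurable_clamp01.comp measurable_fst.fst) measurable_snd).inter
          (measurableSet_le measurable_snd measurable_const))
      exact hSM.integral_prod_right'.measurable
end

section
/- Let f be the generating function of a probability distribution on ℕ with f'(1) = 1 and f''(1) = σ² ∈ (0,∞), and let f_{(n)} be the n-fold iterate. Then n(1 − f_{(n)}(0)) → 2/σ² as n → ∞ (Kolmogorov's estimate for critical Galton–Watson survival probability), provided p_1 ≠ 1. -/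
open Filter Finset Topology

theorem stmt14 (p : ℕ → ℝ) (hp : ∀ l, 0 ≤ p l) (hsum : ∑' l, p l = 1)
    (f : ℝ → ℝ) (hf : ∀ s : ℝ, f s = ∑' l : ℕ, p l * s ^ l)
    (hmean : ∑' l : ℕ, (l : ℝ) * p l = 1)
    (σ2 : ℝ) (hσ2 : σ2 = ∑' l : ℕ, (l : ℝ) * ((l : ℝ) - 1) * p l)
    (hσpos : 0 < σ2)
    (hs2 : Summable fun l : ℕ => (l : ℝ) ^ 2 * p l)
    (hp1 : p 1 ≠ 1) :
    Filter.Tendsto (fun n : ℕ => (n : ℝ) * (1 - f^[n] 0)) Filter.atTop (nhds (2 / σ2)) := by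
  -- basic summabilities
  have hPsum : Summable p := by
    by_contra hc; rw [tsum_eq_zero_of_not_summable hc] at hsum; norm_num at hsum
  have hLsum : Summable (fun l : ℕ => (l : ℝ) * p l) := by
    by_contra hc; rw [tsum_eq_zero_of_not_summable hc] at hmean; norm_num at hmean
  -- geometric partial sums
  set G : ℕ → ℝ → ℝ := fun l s => ∑ j ∈ range l, s ^ j with hGdef
  set K : ℕ → ℝ → ℝ := fun l s => ∑ j ∈ range l, ∑ i ∈ range j, s ^ i with hKdef
  have hGnonneg : ∀ l, ∀ s ∈ Set.Icc (0:ℝ) 1, 0 ≤ G l s := by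
    intro l s hs
    exact Finset.sum_nonneg fun j _ => pow_nonneg hs.1 j
  have hGle : ∀ l, ∀ s ∈ Set.Icc (0:ℝ) 1, G l s ≤ l := by
    intro l s hs
    calc G l s ≤ ∑ j ∈ range l, 1 :=
          Finset.sum_le_sum fun j _ => pow_le_one₀ hs.1 hs.2
      _ = l := by simp
  have hKnonneg : ∀ l, ∀ s ∈ Set.Icc (0:ℝ) 1, 0 ≤ K l s := by
    intro l s hs
    exact Finset.sum_nonneg fun j _ => hGnonneg j s hs
  have hKle : ∀ l, ∀ s ∈ Set.Icc (0:ℝ) 1, K l s ≤ (l:ℝ)^2 := by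
    intro l s hs
    calc K l s ≤ ∑ j ∈ range l, (l:ℝ) := by
          refine Finset.sum_le_sum fun j hj => ?_
          refine (hGle j s hs).trans ?_
          exact_mod_cast Nat.le_of_lt (Finset.mem_range.mp hj)
      _ = (l:ℝ)^2 := by simp [sq]
  -- generating functions
  set A : ℝ → ℝ := fun s => ∑' l, p l * G l s with hAdef
  set B : ℝ → ℝ := fun s => ∑' l, p l * K l s with hBdef
  have hAsum : ∀ s ∈ Set.Icc (0:ℝ) 1, Summable (fun l => p l * G l s) := by
    intro s hs
    refine Summable.of_nonneg_of_le (fun l => mul_nonneg (hp l) (hGnonneg l s hs))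
      (fun l => ?_) hLsum
    calc p l * G l s ≤ p l * l := mul_le_mul_of_nonneg_left (hGle l s hs) (hp l)
      _ = l * p l := mul_comm _ _
  have hBsum : ∀ s ∈ Set.Icc (0:ℝ) 1, Summable (fun l => p l * K l s) := by
    intro s hs
    refine Summable.of_nonneg_of_le (fun l => mul_nonneg (hp l) (hKnonneg l s hs))
      (fun l => ?_) hs2
    calc p l * K l s ≤ p l * (l:ℝ)^2 := mul_le_mul_of_nonneg_left (hKle l s hs) (hp l)
      _ = (l:ℝ)^2 * p l := mul_comm _ _
  have hpow : ∀ s ∈ Set.Icc (0:ℝ) 1, Summable (fun l : ℕ => p l * s ^ l) := by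
    intro s hs
    refine Summable.of_nonneg_of_le (fun l => mul_nonneg (hp l) (pow_nonneg hs.1 l))
      (fun l => ?_) hPsum
    calc p l * s ^ l ≤ p l * 1 := mul_le_mul_of_nonneg_left (pow_le_one₀ hs.1 hs.2) (hp l)
      _ = p l := mul_one _
  -- key identity 1 : 1 - f s = (1 - s) * A s
  have id1 : ∀ s ∈ Set.Icc (0:ℝ) 1, 1 - f s = (1 - s) * A s := by
    intro s hs
    have : (1:ℝ) - f s = ∑' l, (p l - p l * s ^ l) := by
      rw [hf s, ← hsum]
      exact (Summable.tsum_sub hPsum (hpow s hs)).symm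
    rw [this, hAdef, ← tsum_mul_left]
    congr 1; funext l
    have hg : G l s * (s - 1) = s ^ l - 1 := geom_sum_mul s l
    have : (1 - s) * G l s = 1 - s ^ l := by linarith [hg]
    calc p l - p l * s ^ l = p l * (1 - s ^ l) := by ring
      _ = p l * ((1 - s) * G l s) := by rw [this]
      _ = (1 - s) * (p l * G l s) := by ring
  have hA1 : A 1 = 1 := by
    calc A 1 = ∑' l : ℕ, (l:ℝ) * p l :=
          tsum_congr fun l => by simp [hGdef, mul_comm]
      _ = 1 := hmean
  -- key identity 2 : 1 - A s = (1 - s) * B s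
  have id2 : ∀ s ∈ Set.Icc (0:ℝ) 1, 1 - A s = (1 - s) * B s := by
    intro s hs
    have : (1:ℝ) - A s = ∑' l : ℕ, ((l:ℝ) * p l - p l * G l s) := by
      rw [show A s = ∑' l : ℕ, p l * G l s from rfl, ← hmean]
      exact (Summable.tsum_sub hLsum (hAsum s hs)).symm
    rw [this, hBdef, ← tsum_mul_left]
    congr 1; funext l
    have key : (l:ℝ) - G l s = (1 - s) * K l s := by
      have : (l:ℝ) - G l s = ∑ j ∈ range l, (1 - s ^ j) := by
        rw [Finset.sum_sub_distrib]
        simp [hGdef]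
      rw [this, hKdef]
      rw [Finset.mul_sum]
      refine Finset.sum_congr rfl fun j _ => ?_
      have hg : G j s * (s - 1) = s ^ j - 1 := geom_sum_mul s j
      simp only [hGdef] at hg ⊢
      linarith [hg]
    calc (l:ℝ) * p l - p l * G l s = p l * ((l:ℝ) - G l s) := by ring
      _ = p l * ((1 - s) * K l s) := by rw [key]
      _ = (1 - s) * (p l * K l s) := by ring
  have hB1 : B 1 = σ2 / 2 := by
    have hK1 : ∀ l : ℕ, K l 1 = (l:ℝ) * ((l:ℝ) - 1) / 2 := by
      intro l
      have h2 : (∑ j ∈ range l, j) * 2 = l * (l - 1) := Finset.sum_range_id_mul_two l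
      have : K l 1 = ((∑ j ∈ range l, j : ℕ) : ℝ) := by
        simp [hKdef]
      rw [this]
      rcases Nat.eq_zero_or_pos l with h0 | h1
      · subst h0; simp
      · have : ((∑ j ∈ range l, j : ℕ) : ℝ) * 2 = (l:ℝ) * ((l:ℝ) - 1) := by
          have := congrArg (Nat.cast : ℕ → ℝ) h2
          push_cast [Nat.cast_sub h1] at this
          convert this using 2
          push_cast [Nat.cast_sub h1]
          ring
        linarith [this]
    show (∑' l : ℕ, p l * K l 1) = σ2 / 2
    rw [hσ2, ← tsum_div_const]
    apply tsum_congr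
    intro l
    rw [hK1 l]; ring
  -- continuity
  have hAc : ContinuousOn A (Set.Icc (0:ℝ) 1) := by
    refine continuousOn_tsum (fun l => ?_) hLsum (fun l s hs => ?_)
    · exact (continuous_const.mul (continuous_finset_sum _ fun j _ => continuous_pow j)).continuousOn
    · rw [Real.norm_eq_abs, abs_of_nonneg (mul_nonneg (hp l) (hGnonneg l s hs))]
      calc p l * G l s ≤ p l * l := mul_le_mul_of_nonneg_left (hGle l s hs) (hp l)
        _ = l * p l := mul_comm _ _
  have hBc : ContinuousOn B (Set.Icc (0:ℝ) 1) := by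
    refine continuousOn_tsum (fun l => ?_) hs2 (fun l s hs => ?_)
    · exact (continuous_const.mul (continuous_finset_sum _ fun j _ =>
        continuous_finset_sum _ fun i _ => continuous_pow i)).continuousOn
    · rw [Real.norm_eq_abs, abs_of_nonneg (mul_nonneg (hp l) (hKnonneg l s hs))]
      calc p l * K l s ≤ p l * (l:ℝ)^2 := mul_le_mul_of_nonneg_left (hKle l s hs) (hp l)
        _ = (l:ℝ)^2 * p l := mul_comm _ _
  -- existence of L ≥ 2 with p L > 0
  obtain ⟨L, hL2, hpL⟩ : ∃ L : ℕ, 2 ≤ L ∧ 0 < p L := by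
    by_contra hc
    push_neg at hc
    have hzero : ∀ l : ℕ, (l:ℝ) * ((l:ℝ) - 1) * p l = 0 := by
      intro l
      match l with
      | 0 => simp
      | 1 => simp
      | (n+2) =>
        have := hc (n+2) (by omega)
        have : p (n+2) = 0 := le_antisymm this (hp (n+2))
        simp [this]
    rw [hσ2, tsum_congr hzero] at hσpos
    simp at hσpos
  have h1L : 1 ∈ range L := Finset.mem_range.mpr (by omega)
  have h0L : 0 ∈ range L := Finset.mem_range.mpr (by omega)
  -- positivity bounds
  have hKge1 : ∀ s ∈ Set.Icc (0:ℝ) 1, 1 ≤ K L s := by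
    intro s hs
    have : (1:ℝ) = ∑ i ∈ range 1, s ^ i := by simp
    calc (1:ℝ) = ∑ i ∈ range 1, s ^ i := this
      _ ≤ K L s := Finset.single_le_sum (f := fun j => ∑ i ∈ range j, s ^ i)
          (fun j _ => Finset.sum_nonneg fun i _ => pow_nonneg hs.1 i) h1L
  have hGge1 : ∀ s ∈ Set.Icc (0:ℝ) 1, 1 ≤ G L s := by
    intro s hs
    have : (1:ℝ) = s ^ 0 := by simp
    rw [this]
    exact Finset.single_le_sum (f := fun j => s ^ j)
      (fun j _ => pow_nonneg hs.1 j) h0L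
  have hBpos : ∀ s ∈ Set.Icc (0:ℝ) 1, p L ≤ B s := by
    intro s hs
    calc p L = p L * 1 := (mul_one _).symm
      _ ≤ p L * K L s := mul_le_mul_of_nonneg_left (hKge1 s hs) (hp L)
      _ ≤ B s := Summable.le_tsum (hBsum s hs) L
          (fun l _ => mul_nonneg (hp l) (hKnonneg l s hs))
  have hApos : ∀ s ∈ Set.Icc (0:ℝ) 1, p L ≤ A s := by
    intro s hs
    calc p L = p L * 1 := (mul_one _).symm
      _ ≤ p L * G L s := mul_le_mul_of_nonneg_left (hGge1 s hs) (hp L)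
      _ ≤ A s := Summable.le_tsum (hAsum s hs) L
          (fun l _ => mul_nonneg (hp l) (hGnonneg l s hs))
  have hAle1 : ∀ s ∈ Set.Icc (0:ℝ) 1, A s ≤ 1 := by
    intro s hs
    have := id2 s hs
    nlinarith [hBpos s hs, hs.2]
  have hAlt1 : ∀ s, s ∈ Set.Icc (0:ℝ) 1 → s < 1 → A s < 1 := by
    intro s hs hs1
    have := id2 s hs
    nlinarith [hBpos s hs]
  -- the sequence
  set q : ℕ → ℝ := fun n => f^[n] 0 with hqdef
  have hqrec : ∀ n, q (n+1) = f (q n) := by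
    intro n; simp [hqdef, Function.iterate_succ_apply']
  have hqmem : ∀ n, q n ∈ Set.Icc (0:ℝ) 1 ∧ q n < 1 := by
    intro n
    induction n with
    | zero => constructor
              · constructor <;> norm_num [hqdef]
              · norm_num [hqdef]
    | succ n ih =>
      obtain ⟨hmem, hlt⟩ := ih
      have hfq : f (q n) = 1 - (1 - q n) * A (q n) := by
        have := id1 (q n) hmem; linarith
      have hApos' := hApos (q n) hmem
      have hAle1' := hAle1 (q n) hmem
      have h1 : 0 ≤ f (q n) := by
        rw [hf]
        exact tsum_nonneg fun l => mul_nonneg (hp l) (pow_nonneg hmem.1 l)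
      have h2 : f (q n) < 1 := by
        rw [hfq]
        have : 0 < (1 - q n) * A (q n) := mul_pos (by linarith [hlt]) (lt_of_lt_of_le hpL hApos')
        linarith
      rw [hqrec n]
      exact ⟨⟨h1, h2.le⟩, h2⟩
  set d : ℕ → ℝ := fun n => 1 - q n with hddef
  have hdpos : ∀ n, 0 < d n := fun n => by
    have := (hqmem n).2; simp [hddef]; linarith
  have hdrec : ∀ n, d (n+1) = d n * A (q n) := by
    intro n
    have := id1 (q n) (hqmem n).1
    simp only [hddef, hqrec n]
    linarith
  have hAq1 : ∀ n, A (q n) < 1 := fun n => hAlt1 (q n) (hqmem n).1 (hqmem n).2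
  have hAqpos : ∀ n, 0 < A (q n) := fun n => lt_of_lt_of_le hpL (hApos (q n) (hqmem n).1)
  have hdanti : Antitone d := by
    refine antitone_nat_of_succ_le fun n => ?_
    rw [hdrec n]
    nlinarith [hdpos n, hAq1 n]
  -- d tends to 0
  have hd0 : Tendsto d atTop (𝓝 0) := by
    have hbdd : BddBelow (Set.range d) := ⟨0, fun x ⟨n, hn⟩ => hn ▸ (hdpos n).le⟩
    have hlim := tendsto_atTop_ciInf hdanti hbdd
    set Ld := ⨅ n, d n with hLddef
    have hLd0 : 0 ≤ Ld := le_ciInf fun n => (hdpos n).le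
    rcases eq_or_lt_of_le hLd0 with heq | hlt
    · rwa [← heq] at hlim
    · exfalso
      have hLdle : Ld ≤ 1 := by
        refine (ciInf_le hbdd 0).trans ?_
        simp [hddef, hqdef]
      have hqlim : Tendsto q atTop (𝓝 (1 - Ld)) := by
        have : Tendsto (fun n => 1 - d n) atTop (𝓝 (1 - Ld)) := tendsto_const_nhds.sub hlim
        refine this.congr fun n => by simp [hddef]
      have hmem1 : (1 - Ld) ∈ Set.Icc (0:ℝ) 1 := ⟨by linarith, by linarith⟩
      have hqlim' : Tendsto q atTop (𝓝[Set.Icc (0:ℝ) 1] (1 - Ld)) := by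
        rw [tendsto_nhdsWithin_iff]
        exact ⟨hqlim, Eventually.of_forall fun n => (hqmem n).1⟩
      have hAcomp : Tendsto (fun n => A (q n)) atTop (𝓝 (A (1 - Ld))) :=
        (hAc.continuousWithinAt hmem1).tendsto.comp hqlim'
      have hlim2 : Tendsto (fun n => d (n+1)) atTop (𝓝 (Ld * A (1 - Ld))) := by
        have := hlim.mul hAcomp
        refine this.congr fun n => (hdrec n).symm
      have hlim3 : Tendsto (fun n => d (n+1)) atTop (𝓝 Ld) :=
        hlim.comp (tendsto_add_atTop_nat 1)
      have heq2 : Ld * A (1 - Ld) = Ld := tendsto_nhds_unique hlim2 hlim3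
      have hAlt : A (1 - Ld) < 1 := hAlt1 _ hmem1 (by linarith)
      nlinarith
  have hq1 : Tendsto q atTop (𝓝[Set.Icc (0:ℝ) 1] 1) := by
    rw [tendsto_nhdsWithin_iff]
    constructor
    · have : Tendsto (fun n => 1 - d n) atTop (𝓝 (1 - 0)) := tendsto_const_nhds.sub hd0
      simpa [hddef] using this.congr fun n => by simp [hddef]
    · exact Eventually.of_forall fun n => (hqmem n).1
  -- ratio tends to σ2/2
  have hmem1' : (1:ℝ) ∈ Set.Icc (0:ℝ) 1 := by norm_num
  have hAq : Tendsto (fun n => A (q n)) atTop (𝓝 1) := by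
    have := (hAc.continuousWithinAt hmem1').tendsto.comp hq1
    rwa [hA1] at this
  have hBq : Tendsto (fun n => B (q n)) atTop (𝓝 (σ2/2)) := by
    have := (hBc.continuousWithinAt hmem1').tendsto.comp hq1
    rwa [hB1] at this
  have hu : Tendsto (fun n => B (q n) / A (q n)) atTop (𝓝 (σ2/2)) := by
    have := hBq.div hAq one_ne_zero
    rw [div_one] at this
    exact this
  -- telescoping
  set a : ℕ → ℝ := fun n => (d n)⁻¹ with hadef
  have hdiff : ∀ n, a (n+1) - a n = B (q n) / A (q n) := by
    intro n
    have hdn := hdpos n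
    have hAn := hAqpos n
    have hid : 1 - A (q n) = d n * B (q n) := by
      have := id2 (q n) (hqmem n).1
      simp only [hddef] at *
      linarith
    have key : ∀ D AA BB : ℝ, D ≠ 0 → AA ≠ 0 → 1 - AA = D * BB →
        (D * AA)⁻¹ - D⁻¹ = BB / AA := by
      intro D AA BB hD hAA hyp
      field_simp
      linear_combination hyp
    show (d (n+1))⁻¹ - (d n)⁻¹ = _
    rw [hdrec n]
    exact key _ _ _ hdn.ne' hAn.ne' hid
  have hsum_tel : ∀ n, ∑ i ∈ range n, (B (q i) / A (q i)) = a n - a 0 := by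
    intro n
    rw [← Finset.sum_range_sub (f := a) n]
    exact Finset.sum_congr rfl fun i _ => (hdiff i).symm
  have ha0 : a 0 = 1 := by simp [hadef, hddef, hqdef]
  have hcesaro := hu.cesaro
  have hcesaro' : Tendsto (fun n : ℕ => (n:ℝ)⁻¹ * (a n - 1)) atTop (𝓝 (σ2/2)) := by
    refine hcesaro.congr fun n => ?_
    rw [hsum_tel n, ha0]
  have hfin : Tendsto (fun n : ℕ => (n:ℝ)⁻¹ * (a n - 1) + (n:ℝ)⁻¹) atTop (𝓝 (σ2/2)) := by
    have := hcesaro'.add tendsto_inv_atTop_nhds_zero_nat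
    simpa using this
  have hσne : σ2 / 2 ≠ 0 := by positivity
  have hinv := hfin.inv₀ hσne
  have : (σ2/2)⁻¹ = 2 / σ2 := by
    field_simp
  rw [this] at hinv
  refine hinv.congr' ?_
  filter_upwards [eventually_ge_atTop 1] with n hn
  have hnpos : (0:ℝ) < n := by exact_mod_cast hn
  have hdn : 0 < 1 - f^[n] 0 := hdpos n
  have han : a n = (1 - f^[n] 0)⁻¹ := rfl
  rw [han]
  rw [show (n:ℝ)⁻¹ * ((1 - f^[n] 0)⁻¹ - 1) + (n:ℝ)⁻¹ = ((n:ℝ) * (1 - f^[n] 0))⁻¹ by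
    rw [mul_inv]; field_simp; ring]
  rw [inv_inv]
end
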